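/- Coefficient bound for increments of the partial sums: let 0 ≤ u < t ≤ 1 be such that nt and nu are integers. If h(s) ∈ (1/2,1), then n^{−(3−2h(s))} · ∑_{j=−∞}^{nt} | ∑_{k=nu+1}^{nt} v_{k−j}(s) |² ≤ [ 2/(1−h(s))² + 1/(2h(s)−1) ] · (t−u)^{3−2h(s)}. -/

import Mathlib

open MeasureTheory Set

private lemma int_Icc_sum {β : Type*} [AddCommMonoid β] (f : ℤ → β) (a b : ℤ) :
    ∑ k ∈ Finset.Icc a b, f k = ∑ i ∈ Finset.range (b + 1 - a).toNat, f (a + i) := by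
  refine Finset.sum_bij' (fun k _ => (k - a).toNat) (fun i _ => a + i) ?_ ?_ ?_ ?_ ?_
  · intro k hk
    simp only [Finset.mem_Icc] at hk
    simp only [Finset.mem_range]
    omega
  · intro i hi
    simp only [Finset.mem_range] at hi
    simp only [Finset.mem_Icc]
    omega
  · intro k hk
    simp only [Finset.mem_Icc] at hk
    omega
  · intro i hi
    simp only [Finset.mem_range] at hi
    omega
  · intro k hk
    simp only [Finset.mem_Icc] at hk
    congr 1
    omega

private lemma rpow_mvt {p a b : ℝ} (hab : a < b) (ha : 0 ≤ a) (h : 0 < a ∨ 0 < p) :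
    ∃ c ∈ Set.Ioo a b, b ^ p - a ^ p = p * c ^ (p - 1) * (b - a) := by
  have hcont : ContinuousOn (fun x : ℝ => x ^ p) (Set.Icc a b) := by
    intro x hx
    rcases h with h | h
    · exact (Real.continuousAt_rpow_const x p
        (Or.inl (ne_of_gt (lt_of_lt_of_le h hx.1)))).continuousWithinAt
    · exact (Real.continuousAt_rpow_const x p (Or.inr h.le)).continuousWithinAt
  have hderiv : ∀ x ∈ Set.Ioo a b, HasDerivAt (fun x : ℝ => x ^ p) (p * x ^ (p - 1)) x :=
    fun x hx => Real.hasDerivAt_rpow_const (Or.inl (ne_of_gt (lt_of_le_of_lt ha hx.1)))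
  obtain ⟨c, hc, hc'⟩ := exists_hasDerivAt_eq_slope (fun x : ℝ => x ^ p) _ hab hcont hderiv
  refine ⟨c, hc, ?_⟩
  rw [hc', div_mul_cancel₀ _ (sub_ne_zero.2 hab.ne')]

private lemma rpow_low {p a b : ℝ} (hp0 : 0 < p) (hp1 : p ≤ 1) (ha : 0 ≤ a) (hab : a < b) :
    p * b ^ (p - 1) * (b - a) ≤ b ^ p - a ^ p := by
  obtain ⟨c, hc, e⟩ := rpow_mvt hab ha (Or.inr hp0)
  rw [e]
  have hc0 : 0 < c := lt_of_le_of_lt ha hc.1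
  have : b ^ (p - 1) ≤ c ^ (p - 1) :=
    Real.rpow_le_rpow_of_nonpos hc0 hc.2.le (by linarith)
  have hba : 0 ≤ b - a := by linarith [hab.le]
  gcongr

private lemma rpow_up {p a b : ℝ} (hp0 : 0 < p) (hp1 : p ≤ 1) (ha : 0 < a) (hab : a < b) :
    b ^ p - a ^ p ≤ p * a ^ (p - 1) * (b - a) := by
  obtain ⟨c, hc, e⟩ := rpow_mvt hab ha.le (Or.inr hp0)
  rw [e]
  have : c ^ (p - 1) ≤ a ^ (p - 1) :=
    Real.rpow_le_rpow_of_nonpos ha hc.1.le (by linarith)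
  have hba : 0 ≤ b - a := by linarith [hab.le]
  gcongr

private lemma rpow_neg_low {q a b : ℝ} (hq : 1 < q) (ha : 0 < a) (hab : a < b) :
    (q - 1) * b ^ (-q) * (b - a) ≤ a ^ (1 - q) - b ^ (1 - q) := by
  obtain ⟨c, hc, e⟩ := rpow_mvt (p := 1 - q) hab ha.le (Or.inl ha)
  have e' : a ^ (1 - q) - b ^ (1 - q) = (q - 1) * c ^ (-q) * (b - a) := by
    have h2 : (1 - q) - 1 = -q := by ring
    rw [h2] at e
    linarith [e]
  rw [e']
  have hc0 : 0 < c := lt_trans ha hc.1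
  have : b ^ (-q) ≤ c ^ (-q) :=
    Real.rpow_le_rpow_of_nonpos hc0 hc.2.le (by linarith)
  have hba : 0 ≤ b - a := by linarith [hab.le]
  have hq1 : 0 ≤ q - 1 := by linarith
  gcongr

private lemma rpow_subadd {p x y : ℝ} (hx : 0 ≤ x) (hy : 0 ≤ y) (hp : 0 ≤ p) (hp1 : p ≤ 1) :
    (x + y) ^ p ≤ x ^ p + y ^ p := by
  have h := NNReal.rpow_add_le_add_rpow x.toNNReal y.toNNReal hp hp1
  have h2 := NNReal.coe_le_coe.2 h
  push_cast at h2
  rwa [Real.coe_toNNReal _ hx, Real.coe_toNNReal _ hy] at h2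
private noncomputable def Gfun (h : ℝ) : ℤ → ℝ := fun z => if 0 ≤ z then (z : ℝ) ^ (1 - h) else 0

private lemma Gfun_nonneg (h : ℝ) (z : ℤ) : 0 ≤ Gfun h z := by
  unfold Gfun
  split_ifs with hz
  · exact Real.rpow_nonneg (by exact_mod_cast hz) _
  · exact le_refl 0

private lemma tail_hasSum {q : ℝ} (hq : 1 < q) {M : ℕ} (hM : 1 ≤ M) :
    HasSum (fun r : ℕ => ((r : ℝ) + M) ^ (1 - q) - ((r : ℝ) + M + 1) ^ (1 - q))
      ((M : ℝ) ^ (1 - q)) := by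
  have hMpos : (0 : ℝ) < M := by exact_mod_cast hM
  set φ : ℕ → ℝ := fun r => ((r : ℝ) + M) ^ (1 - q) with hφ
  have heq : (fun r : ℕ => ((r : ℝ) + M) ^ (1 - q) - ((r : ℝ) + M + 1) ^ (1 - q)) =
      fun r => φ r - φ (r + 1) := by
    funext r
    simp only [hφ]
    congr 2
    push_cast
    ring
  have hnn : ∀ r : ℕ, 0 ≤ φ r - φ (r + 1) := by
    intro r
    have h1 : φ (r + 1) ≤ φ r := by
      apply Real.rpow_le_rpow_of_nonpos (by positivity) _ (by linarith)
      push_cast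
      linarith
    linarith
  have h0 : Filter.Tendsto φ Filter.atTop (nhds 0) := by
    have h1 : Filter.Tendsto (fun r : ℕ => (r : ℝ) + M) Filter.atTop Filter.atTop :=
      Filter.tendsto_atTop_add_const_right _ _ tendsto_natCast_atTop_atTop
    have h2 := (tendsto_rpow_neg_atTop (by linarith : (0 : ℝ) < q - 1)).comp h1
    have h3 : (fun x : ℝ => x ^ (-(q - 1))) ∘ (fun r : ℕ => (r : ℝ) + M) = φ := by
      funext r
      simp only [Function.comp_apply, neg_sub, hφ]
    rwa [h3] at h2
  rw [heq, hasSum_iff_tendsto_nat_of_nonneg hnn]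
  have hps : (fun n : ℕ => ∑ i ∈ Finset.range n, (φ i - φ (i + 1))) = fun n => φ 0 - φ n :=
    funext fun n => Finset.sum_range_sub' φ n
  rw [hps]
  have hφ0 : φ 0 = (M : ℝ) ^ (1 - q) := by simp [hφ]
  rw [← hφ0]
  simpa using tendsto_const_nhds.sub h0
/-- **Coefficient bound for increments of the partial sums.**
With `v_j(s) = (j+1)^{−d(s)}` for `j ≥ 0` and `v_j(s) = 0` for `j < 0`, let `0 ≤ u < t ≤ 1` be
such that `nt` and `nu` are integers.  If `h(s) = Re d(s) ∈ (1/2,1)`, then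
`n^{−(3−2h(s))} ∑_{j=−∞}^{nt} |∑_{k=nu+1}^{nt} v_{k−j}(s)|²
  ≤ [2/(1−h(s))² + 1/(2h(s)−1)] (t−u)^{3−2h(s)}`. -/
theorem coefficient_bound_increments {S : Type*} (d : S → ℂ) (s : S)
    (h1 : 1 / 2 < (d s).re) (h2 : (d s).re < 1)
    (v : ℤ → ℂ) (hv : ∀ j : ℤ, v j = if 0 ≤ j then ((j : ℂ) + 1) ^ (-(d s)) else 0)
    (n : ℕ) (hn : 1 ≤ n) (t u : ℝ) (h0u : 0 ≤ u) (hut : u < t) (ht1 : t ≤ 1)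
    (hnt : Int.fract ((n : ℝ) * t) = 0) (hnu : Int.fract ((n : ℝ) * u) = 0) :
    (n : ℝ) ^ (-(3 - 2 * (d s).re)) *
        ∑' j : ℤ, (if j ≤ ⌊(n : ℝ) * t⌋ then
          ‖∑ k ∈ Finset.Icc (⌊(n : ℝ) * u⌋ + 1) ⌊(n : ℝ) * t⌋, v (k - j)‖ ^ 2 else 0)
      ≤ (2 / (1 - (d s).re) ^ 2 + 1 / (2 * (d s).re - 1)) * (t - u) ^ (3 - 2 * (d s).re) := by
  set h : ℝ := (d s).re with hh
  set N : ℤ := ⌊(n : ℝ) * t⌋ with hNdef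
  set m : ℤ := ⌊(n : ℝ) * u⌋ with hmdef
  set f : ℤ → ℝ :=
    fun j => if j ≤ N then ‖∑ k ∈ Finset.Icc (m + 1) N, v (k - j)‖ ^ 2 else 0 with hfdef
  have hp0 : (0 : ℝ) < 1 - h := by linarith
  have hp1 : (1 : ℝ) - h ≤ 1 := by linarith
  have hq : (1 : ℝ) < 2 * h := by linarith
  have hnpos : (0 : ℝ) < n := by exact_mod_cast hn
  have hNr : ((N : ℝ)) = n * t := by
    rw [Int.fract] at hnt; rw [hNdef]; linarith
  have hmr : ((m : ℝ)) = n * u := by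
    rw [Int.fract] at hnu; rw [hmdef]; linarith
  have hmN : m < N := by
    have : (m : ℝ) < (N : ℝ) := by rw [hNr, hmr]; nlinarith
    exact_mod_cast this
  set M : ℕ := (N - m).toNat with hMdef
  have hM1 : 1 ≤ M := by omega
  have hMz : (M : ℤ) = N - m := by omega
  have hMr : (M : ℝ) = n * (t - u) := by
    have e : ((M : ℤ) : ℝ) = ((N : ℝ) - (m : ℝ)) := by rw [hMz]; push_cast; ring
    push_cast at e
    rw [e, hNr, hmr]; ring
  have hMpos : (0 : ℝ) < M := by
    rw [hMr]; nlinarith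
  -- norm of v
  have hvnorm : ∀ z : ℤ, ‖v z‖ = if 0 ≤ z then ((z : ℝ) + 1) ^ (-h) else 0 := by
    intro z
    rw [hv z]
    split_ifs with hz
    · have hz' : (0 : ℝ) < (z : ℝ) + 1 := by
        have : (0 : ℝ) ≤ (z : ℝ) := by exact_mod_cast hz
        linarith
      have hcast : ((z : ℂ) + 1) = ((((z : ℝ) + 1 : ℝ)) : ℂ) := by push_cast; ring
      rw [hcast, Complex.norm_cpow_eq_rpow_re_of_pos hz']
      rw [Complex.neg_re, ← hh]
    · simp
  -- step bound
  have hGstep : ∀ z : ℤ, ‖v z‖ * (1 - h) ≤ Gfun h (z + 1) - Gfun h z := by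
    intro z
    rw [hvnorm z]
    split_ifs with hz
    · have hzr : (0 : ℝ) ≤ (z : ℝ) := by exact_mod_cast hz
      have e1 : Gfun h (z + 1) = ((z : ℝ) + 1) ^ (1 - h) := by
        unfold Gfun; rw [if_pos (by omega)]; push_cast; ring_nf
      have e2 : Gfun h z = (z : ℝ) ^ (1 - h) := by
        unfold Gfun; rw [if_pos hz]
      rw [e1, e2]
      have key := rpow_low (p := 1 - h) (a := (z : ℝ)) (b := (z : ℝ) + 1) hp0 hp1 hzr
        (by linarith)
      rw [show (1 : ℝ) - h - 1 = -h by ring] at key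
      rw [show (z : ℝ) + 1 - (z : ℝ) = 1 by ring, mul_one] at key
      linarith
    · rw [zero_mul]
      have e2 : Gfun h z = 0 := by unfold Gfun; rw [if_neg hz]
      rw [e2, sub_zero]
      exact Gfun_nonneg h _
  -- the inner sum bound
  have hA : ∀ r : ℕ, ‖∑ k ∈ Finset.Icc (m + 1) N, v (k - (N - (r : ℤ)))‖ * (1 - h) ≤
      Gfun h ((r : ℤ) + 1) - Gfun h ((r : ℤ) + 1 - (M : ℤ)) := by
    intro r
    have hcount : (N + 1 - (m + 1)).toNat = M := by omega
    rw [int_Icc_sum (fun k => v (k - (N - (r : ℤ)))) (m + 1) N, hcount]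
    set g : ℕ → ℝ := fun i => Gfun h ((i : ℤ) + (r : ℤ) + 1 - (M : ℤ)) with hgdef
    calc ‖∑ i ∈ Finset.range M, v (m + 1 + (i : ℤ) - (N - (r : ℤ)))‖ * (1 - h)
        ≤ (∑ i ∈ Finset.range M, ‖v (m + 1 + (i : ℤ) - (N - (r : ℤ)))‖) * (1 - h) := by
          apply mul_le_mul_of_nonneg_right (norm_sum_le _ _) hp0.le
      _ = ∑ i ∈ Finset.range M, ‖v (m + 1 + (i : ℤ) - (N - (r : ℤ)))‖ * (1 - h) :=
          Finset.sum_mul _ _ _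
      _ ≤ ∑ i ∈ Finset.range M, (g (i + 1) - g i) := by
          apply Finset.sum_le_sum
          intro i _
          have a1 : m + 1 + (i : ℤ) - (N - (r : ℤ)) = (i : ℤ) + (r : ℤ) + 1 - (M : ℤ) := by
            omega
          rw [a1]
          have a2 : g (i + 1) = Gfun h (((i : ℤ) + (r : ℤ) + 1 - (M : ℤ)) + 1) := by
            rw [hgdef]; congr 1; push_cast; ring
          have a3 : g i = Gfun h ((i : ℤ) + (r : ℤ) + 1 - (M : ℤ)) := rfl
          rw [a2, a3]
          exact hGstep _
      _ = g M - g 0 := Finset.sum_range_sub g M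
      _ = Gfun h ((r : ℤ) + 1) - Gfun h ((r : ℤ) + 1 - (M : ℤ)) := by
          rw [hgdef]
          congr 2
          · push_cast; ring
          · push_cast; ring
  -- division form of the inner bound
  have hB : ∀ r : ℕ, ‖∑ k ∈ Finset.Icc (m + 1) N, v (k - (N - (r : ℤ)))‖ ≤
      (Gfun h ((r : ℤ) + 1) - Gfun h ((r : ℤ) + 1 - (M : ℤ))) / (1 - h) :=
    fun r => (le_div_iff₀ hp0).2 (hA r)
  have hG1 : ∀ r : ℕ, Gfun h ((r : ℤ) + 1) = ((r : ℝ) + 1) ^ (1 - h) := by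
    intro r; unfold Gfun; rw [if_pos (by omega)]; norm_num
  have hBound1 : ∀ r : ℕ, (Gfun h ((r : ℤ) + 1) - Gfun h ((r : ℤ) + 1 - (M : ℤ))) / (1 - h)
      ≤ (M : ℝ) ^ (1 - h) / (1 - h) := by
    intro r
    apply (div_le_div_iff_of_pos_right hp0).2
    by_cases hcond : (0 : ℤ) ≤ (r : ℤ) + 1 - (M : ℤ)
    · have e : Gfun h ((r : ℤ) + 1 - (M : ℤ)) = ((r : ℝ) + 1 - (M : ℝ)) ^ (1 - h) := by
        unfold Gfun; rw [if_pos hcond]; norm_num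
      rw [hG1 r, e]
      have hx : (0 : ℝ) ≤ (r : ℝ) + 1 - (M : ℝ) := by exact_mod_cast hcond
      have hsub := rpow_subadd (x := (r : ℝ) + 1 - (M : ℝ)) (y := (M : ℝ)) hx hMpos.le
        hp0.le hp1
      rw [show (r : ℝ) + 1 - (M : ℝ) + (M : ℝ) = (r : ℝ) + 1 by ring] at hsub
      linarith
    · have e : Gfun h ((r : ℤ) + 1 - (M : ℤ)) = 0 := by unfold Gfun; rw [if_neg hcond]
      rw [hG1 r, e, sub_zero]
      apply Real.rpow_le_rpow (by positivity) _ hp0.le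
      have : (r : ℤ) + 1 ≤ (M : ℤ) := by omega
      exact_mod_cast this
  have hBound2 : ∀ r : ℕ, 2 * M ≤ r →
      (Gfun h ((r : ℤ) + 1) - Gfun h ((r : ℤ) + 1 - (M : ℤ))) / (1 - h)
      ≤ (M : ℝ) * ((r : ℝ) + 1 - (M : ℝ)) ^ (-h) := by
    intro r hr
    rw [div_le_iff₀ hp0]
    have hcond : (0 : ℤ) ≤ (r : ℤ) + 1 - (M : ℤ) := by omega
    have e : Gfun h ((r : ℤ) + 1 - (M : ℤ)) = ((r : ℝ) + 1 - (M : ℝ)) ^ (1 - h) := by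
      unfold Gfun; rw [if_pos hcond]; norm_num
    rw [hG1 r, e]
    have ha : (0 : ℝ) < (r : ℝ) + 1 - (M : ℝ) := by
      have : (0 : ℤ) < (r : ℤ) + 1 - (M : ℤ) := by omega
      exact_mod_cast this
    have key := rpow_up (p := 1 - h) (a := (r : ℝ) + 1 - (M : ℝ)) (b := (r : ℝ) + 1)
      hp0 hp1 ha (by linarith [hMpos])
    rw [show (1 : ℝ) - h - 1 = -h by ring] at key
    rw [show (r : ℝ) + 1 - ((r : ℝ) + 1 - (M : ℝ)) = (M : ℝ) by ring] at key
    nlinarith [key]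
  -- majorant
  set GG : ℕ → ℝ := fun r => if r < 2 * M then ((M : ℝ) ^ (1 - h) / (1 - h)) ^ 2
      else ((M : ℝ) * ((r : ℝ) + 1 - (M : ℝ)) ^ (-h)) ^ 2 with hGGdef
  have hf_eval : ∀ r : ℕ, f (N - (r : ℤ)) =
      ‖∑ k ∈ Finset.Icc (m + 1) N, v (k - (N - (r : ℤ)))‖ ^ 2 := by
    intro r
    simp only [hfdef]
    rw [if_pos (show N - (r : ℤ) ≤ N by omega)]
  have hFGG : ∀ r : ℕ, f (N - (r : ℤ)) ≤ GG r := by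
    intro r
    rw [hf_eval r]
    by_cases hr : r < 2 * M
    · have hb := (hB r).trans (hBound1 r)
      have e : GG r = ((M : ℝ) ^ (1 - h) / (1 - h)) ^ 2 := if_pos hr
      rw [e]
      exact pow_le_pow_left₀ (norm_nonneg _) hb 2
    · have hb := (hB r).trans (hBound2 r (by omega))
      have e : GG r = ((M : ℝ) * ((r : ℝ) + 1 - (M : ℝ)) ^ (-h)) ^ 2 := if_neg hr
      rw [e]
      exact pow_le_pow_left₀ (norm_nonneg _) hb 2
  have hf_nonneg : ∀ j : ℤ, 0 ≤ f j := by
    intro j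
    simp only [hfdef]
    split_ifs <;> positivity
  have hGG_nonneg : ∀ r : ℕ, 0 ≤ GG r := by
    intro r
    simp only [hGGdef]
    split_ifs <;> positivity
  -- tail
  have h2h : (0 : ℝ) < 2 * h - 1 := by linarith
  set ψ : ℕ → ℝ := fun r => ((r : ℝ) + M) ^ (1 - 2 * h) - ((r : ℝ) + M + 1) ^ (1 - 2 * h)
    with hψdef
  have hψsum : HasSum ψ ((M : ℝ) ^ (1 - 2 * h)) := tail_hasSum hq hM1
  have hkey : ∀ r : ℕ, GG (r + 2 * M) ≤ (M : ℝ) ^ 2 / (2 * h - 1) * ψ r := by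
    intro r
    have e1 : GG (r + 2 * M) = ((M : ℝ) * ((r : ℝ) + (M : ℝ) + 1) ^ (-h)) ^ 2 := by
      simp only [hGGdef]
      rw [if_neg (by omega)]
      congr 3
      push_cast
      ring
    rw [e1]
    have hx : (0 : ℝ) < (r : ℝ) + (M : ℝ) + 1 := by positivity
    have e2 : ((M : ℝ) * ((r : ℝ) + (M : ℝ) + 1) ^ (-h)) ^ 2 =
        (M : ℝ) ^ 2 * ((r : ℝ) + (M : ℝ) + 1) ^ (-(2 * h)) := by
      rw [mul_pow, sq (((r : ℝ) + (M : ℝ) + 1) ^ (-h)), ← Real.rpow_add hx,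
        show -h + -h = -(2 * h) by ring]
    rw [e2]
    have ha : (0 : ℝ) < (r : ℝ) + (M : ℝ) := by
      have : (0 : ℝ) < (M : ℝ) := hMpos
      positivity
    have key := rpow_neg_low (q := 2 * h) (a := (r : ℝ) + (M : ℝ)) (b := (r : ℝ) + (M : ℝ) + 1)
      hq ha (by linarith)
    rw [show (r : ℝ) + (M : ℝ) + 1 - ((r : ℝ) + (M : ℝ)) = 1 by ring, mul_one] at key
    have hψr : (2 * h - 1) * ((r : ℝ) + (M : ℝ) + 1) ^ (-(2 * h)) ≤ ψ r := key
    calc (M : ℝ) ^ 2 * ((r : ℝ) + (M : ℝ) + 1) ^ (-(2 * h))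
        = (M : ℝ) ^ 2 / (2 * h - 1) * ((2 * h - 1) * ((r : ℝ) + (M : ℝ) + 1) ^ (-(2 * h))) := by
          field_simp
      _ ≤ (M : ℝ) ^ 2 / (2 * h - 1) * ψ r := by
          apply mul_le_mul_of_nonneg_left hψr
          exact div_nonneg (sq_nonneg _) h2h.le
  have hGGtail_summable : Summable (fun r : ℕ => GG (r + 2 * M)) :=
    Summable.of_nonneg_of_le (fun r => hGG_nonneg _) hkey (hψsum.summable.mul_left _)
  have hGGsum : Summable GG := (summable_nat_add_iff (2 * M)).mp hGGtail_summable
  -- reindex the integer sum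
  have hinj : Function.Injective (fun r : ℕ => N - (r : ℤ)) := by
    intro a b hab
    simp only at hab
    omega
  have hsupp : Function.support f ⊆ Set.range (fun r : ℕ => N - (r : ℤ)) := by
    intro j hj
    have hjN : j ≤ N := by
      by_contra hc
      apply hj
      simp only [hfdef]
      rw [if_neg hc]
    exact ⟨(N - j).toNat, by simp only; omega⟩
  have hFsummable : Summable (fun r : ℕ => f (N - (r : ℤ))) :=
    Summable.of_nonneg_of_le (fun r => hf_nonneg _) hFGG hGGsum
  have htsum_eq : ∑' j : ℤ, f j = ∑' r : ℕ, f (N - (r : ℤ)) := (hinj.tsum_eq hsupp).symm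
  -- assemble the bound on the series
  have hsum1 : ∑' r : ℕ, f (N - (r : ℤ)) ≤ ∑' r : ℕ, GG r :=
    Summable.tsum_le_tsum hFGG hFsummable hGGsum
  have hsplit : ∑' r : ℕ, GG r = ∑ r ∈ Finset.range (2 * M), GG r + ∑' r : ℕ, GG (r + 2 * M) :=
    (Summable.sum_add_tsum_nat_add (2 * M) hGGsum).symm
  have hhead : ∑ r ∈ Finset.range (2 * M), GG r
      = (2 * (M : ℝ)) * ((M : ℝ) ^ (1 - h) / (1 - h)) ^ 2 := by
    have e : ∀ r ∈ Finset.range (2 * M), GG r = ((M : ℝ) ^ (1 - h) / (1 - h)) ^ 2 := by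
      intro r hr
      simp only [hGGdef]
      exact if_pos (Finset.mem_range.mp hr)
    rw [Finset.sum_congr rfl e, Finset.sum_const, Finset.card_range, nsmul_eq_mul]
    push_cast
    ring
  have htailsum : ∑' r : ℕ, GG (r + 2 * M) ≤ (M : ℝ) ^ 2 / (2 * h - 1) * (M : ℝ) ^ (1 - 2 * h) := by
    calc ∑' r : ℕ, GG (r + 2 * M) ≤ ∑' r : ℕ, (M : ℝ) ^ 2 / (2 * h - 1) * ψ r :=
        Summable.tsum_le_tsum hkey hGGtail_summable (hψsum.summable.mul_left _)
      _ = (M : ℝ) ^ 2 / (2 * h - 1) * (M : ℝ) ^ (1 - 2 * h) := by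
        rw [tsum_mul_left, hψsum.tsum_eq]
  -- rpow algebra
  have eMa : ((M : ℝ) ^ (1 - h)) ^ 2 = (M : ℝ) ^ (2 - 2 * h) := by
    rw [sq, ← Real.rpow_add hMpos, show (1 - h) + (1 - h) = 2 - 2 * h by ring]
  have eMb : (M : ℝ) * (M : ℝ) ^ (2 - 2 * h) = (M : ℝ) ^ (3 - 2 * h) := by
    nth_rewrite 1 [← Real.rpow_one (M : ℝ)]
    rw [← Real.rpow_add hMpos, show (1 : ℝ) + (2 - 2 * h) = 3 - 2 * h by ring]
  have eM1 : (2 * (M : ℝ)) * ((M : ℝ) ^ (1 - h) / (1 - h)) ^ 2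
      = 2 / (1 - h) ^ 2 * (M : ℝ) ^ (3 - 2 * h) := by
    rw [div_pow, eMa, ← mul_div_assoc, mul_assoc, eMb]
    ring
  have eM2 : (M : ℝ) ^ 2 / (2 * h - 1) * (M : ℝ) ^ (1 - 2 * h)
      = 1 / (2 * h - 1) * (M : ℝ) ^ (3 - 2 * h) := by
    have e : ((M : ℝ)) ^ (2 : ℕ) = (M : ℝ) ^ ((2 : ℕ) : ℝ) := (Real.rpow_natCast _ 2).symm
    rw [e, div_mul_eq_mul_div, ← Real.rpow_add hMpos,
      show ((2 : ℕ) : ℝ) + (1 - 2 * h) = 3 - 2 * h by push_cast; ring]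
    ring
  have hrfinal : ∑' j : ℤ, f j ≤ (2 / (1 - h) ^ 2 + 1 / (2 * h - 1)) * (M : ℝ) ^ (3 - 2 * h) := by
    rw [htsum_eq]
    refine le_trans hsum1 ?_
    rw [hsplit, hhead]
    calc (2 * (M : ℝ)) * ((M : ℝ) ^ (1 - h) / (1 - h)) ^ 2 + ∑' r : ℕ, GG (r + 2 * M)
        ≤ (2 * (M : ℝ)) * ((M : ℝ) ^ (1 - h) / (1 - h)) ^ 2
          + (M : ℝ) ^ 2 / (2 * h - 1) * (M : ℝ) ^ (1 - 2 * h) := by linarith [htailsum]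
      _ = (2 / (1 - h) ^ 2 + 1 / (2 * h - 1)) * (M : ℝ) ^ (3 - 2 * h) := by
        rw [eM1, eM2]; ring
  -- conclude
  have hgoal : (n : ℝ) ^ (-(3 - 2 * h)) * ((2 / (1 - h) ^ 2 + 1 / (2 * h - 1))
      * (M : ℝ) ^ (3 - 2 * h))
      = (2 / (1 - h) ^ 2 + 1 / (2 * h - 1)) * (t - u) ^ (3 - 2 * h) := by
    have e : (M : ℝ) ^ (3 - 2 * h) = (n : ℝ) ^ (3 - 2 * h) * (t - u) ^ (3 - 2 * h) := by
      rw [hMr, Real.mul_rpow hnpos.le (by linarith : (0 : ℝ) ≤ t - u)]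
    have enn : (n : ℝ) ^ (-(3 - 2 * h)) * (n : ℝ) ^ (3 - 2 * h) = 1 := by
      rw [← Real.rpow_add hnpos, show -(3 - 2 * h) + (3 - 2 * h) = 0 by ring, Real.rpow_zero]
    calc (n : ℝ) ^ (-(3 - 2 * h)) * ((2 / (1 - h) ^ 2 + 1 / (2 * h - 1)) * (M : ℝ) ^ (3 - 2 * h))
        = ((n : ℝ) ^ (-(3 - 2 * h)) * (n : ℝ) ^ (3 - 2 * h))
            * ((2 / (1 - h) ^ 2 + 1 / (2 * h - 1)) * (t - u) ^ (3 - 2 * h)) := by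
          rw [e]; ring
      _ = (2 / (1 - h) ^ 2 + 1 / (2 * h - 1)) * (t - u) ^ (3 - 2 * h) := by
          rw [enn, one_mul]
  calc (n : ℝ) ^ (-(3 - 2 * h)) * ∑' j : ℤ, f j
      ≤ (n : ℝ) ^ (-(3 - 2 * h)) * ((2 / (1 - h) ^ 2 + 1 / (2 * h - 1))
          * (M : ℝ) ^ (3 - 2 * h)) := by
        apply mul_le_mul_of_nonneg_left hrfinal (Real.rpow_nonneg hnpos.le _)
    _ = _ := hgoal
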